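/- Let V be a finite-dimensional complex vector space with a nondegenerate symmetric bilinear form ω, let n = dim V, and suppose k ≤ 3, or k = 4 and n = 4. If a linear map A : ℂᵏ → V is not ample with respect to ω and B : ℂᵏ → ℂᵖ is a nonzero linear map, then there exists a linear map C : ℂᵖ → V such that A + C ∘ B is ample with respect to ω. -/

import Mathlib

/-- A linear map `A : E → W` is ample with respect to a bilinear form `β` on `W` if the
restriction of `β` to the range of `A` is either identically zero or nondegenerate. -/
def IsAmple {E W : Type*} [AddCommGroup E] [Module ℂ E] [AddCommGroup W] [Module ℂ W]
    (β : W →ₗ[ℂ] W →ₗ[ℂ] ℂ) (A : E →ₗ[ℂ] W) : Prop :=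
  (∀ w ∈ LinearMap.range A, ∀ w' ∈ LinearMap.range A, β w w' = 0) ∨
  (∀ w ∈ LinearMap.range A, w ≠ 0 → ∃ w' ∈ LinearMap.range A, β w w' ≠ 0)

private lemma exists_comp_eq {E F W : Type*} [AddCommGroup E] [Module ℂ E]
    [AddCommGroup F] [Module ℂ F] [AddCommGroup W] [Module ℂ W]
    (B : E →ₗ[ℂ] F) (M : E →ₗ[ℂ] W) (h : LinearMap.ker B ≤ LinearMap.ker M) :
    ∃ C : F →ₗ[ℂ] W, C ∘ₗ B = M := by
  obtain ⟨g, hg⟩ := ((LinearMap.ker B).liftQ B le_rfl).exists_leftInverse_of_injective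
    (Submodule.ker_liftQ_eq_bot _ _ _ le_rfl)
  refine ⟨((LinearMap.ker B).liftQ M h) ∘ₗ g, LinearMap.ext fun x => ?_⟩
  have h1 : g (B x) = Submodule.Quotient.mk x := by
    have h2 := LinearMap.congr_fun hg (Submodule.Quotient.mk x)
    simpa using h2
  simp [LinearMap.comp_apply, h1]

/-- Proposition 4(A): let `V` carry a nondegenerate symmetric bilinear form `ω`, and suppose
`k ≤ 3`, or `k = 4` and `dim V = 4`. If `A : ℂᵏ → V` is not ample and `B : ℂᵏ → ℂᵖ` is
nonzero, then `A + C ∘ B` is ample for some `C : ℂᵖ → V`. -/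
theorem not_ample_perturb_comp {V : Type*} [AddCommGroup V] [Module ℂ V]
    [FiniteDimensional ℂ V]
    (ω : V →ₗ[ℂ] V →ₗ[ℂ] ℂ)
    (hsymm : ∀ x y : V, ω x y = ω y x)
    (hnd : ∀ x : V, (∀ y : V, ω x y = 0) → x = 0)
    (k p : ℕ) (hk : k ≤ 3 ∨ (k = 4 ∧ Module.finrank ℂ V = 4))
    (A : (Fin k → ℂ) →ₗ[ℂ] V) (hA : ¬ IsAmple ω A)
    (B : (Fin k → ℂ) →ₗ[ℂ] (Fin p → ℂ)) (hB : B ≠ 0) :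
    ∃ C : (Fin p → ℂ) →ₗ[ℂ] V, IsAmple ω (A + C ∘ₗ B) := by
  classical
  set K : Submodule ℂ (Fin k → ℂ) := LinearMap.ker B with hKdef
  set U : Submodule ℂ V := K.map A with hUdef
  -- the map V → Dual U induced by ω
  set Φ : V →ₗ[ℂ] Module.Dual ℂ U :=
    U.subtype.dualMap ∘ₗ (ω : V →ₗ[ℂ] Module.Dual ℂ V) with hΦdef
  have hΦapp : ∀ (v : V) (u : U), Φ v u = ω v (u : V) := fun v u => rfl
  have hωinj : Function.Injective (ω : V →ₗ[ℂ] Module.Dual ℂ V) := by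
    intro x y hxy
    have h0 : ∀ z, ω (x - y) z = 0 := fun z => by
      have hx : ω x z = ω y z := by rw [hxy]
      simp [map_sub, hx]
    have := hnd _ h0
    rwa [sub_eq_zero] at this
  have hωsurj : Function.Surjective (ω : V →ₗ[ℂ] Module.Dual ℂ V) :=
    (LinearMap.injective_iff_surjective_of_finrank_eq_finrank
      (Subspace.dual_finrank_eq (V := V)).symm).mp hωinj
  have hΦsurj : Function.Surjective Φ := by
    rw [hΦdef, LinearMap.coe_comp]
    exact (LinearMap.dualMap_surjective_of_injective U.injective_subtype).comp hωsurj
  set Up : Submodule ℂ V := LinearMap.ker Φ with hUpdef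
  have hUp_mem : ∀ v : V, v ∈ Up ↔ ∀ u ∈ U, ω v u = 0 := by
    intro v
    constructor
    · intro hv u hu
      have h2 : Φ v = 0 := hv
      have h3 := congrArg (fun f => f ⟨u, hu⟩) h2
      simpa [hΦapp] using h3
    · intro hv
      show Φ v = 0
      ext u
      simpa [hΦapp] using hv u u.2
  have hUp_rank : Module.finrank ℂ U + Module.finrank ℂ Up = Module.finrank ℂ V := by
    have h1 := LinearMap.finrank_range_add_finrank_ker Φ
    rwa [LinearMap.range_eq_top.mpr hΦsurj, finrank_top, Subspace.dual_finrank_eq] at h1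
  set R : Submodule ℂ V := U ⊓ Up with hRdef
  -- pick a vector outside ker B
  obtain ⟨x0, hx0⟩ : ∃ x0, B x0 ≠ 0 := by
    by_contra h
    push_neg at h
    exact hB (LinearMap.ext h)
  -- a complement of K and associated projections
  obtain ⟨Kc, hKc⟩ := K.exists_isCompl
  set prK := Submodule.projectionOnto K Kc hKc with hprK
  set prC := Submodule.projectionOnto Kc K hKc.symm with hprC
  set π : (Fin k → ℂ) →ₗ[ℂ] (Fin k → ℂ) := K.subtype ∘ₗ prK with hπdef
  have hπmem : ∀ x, π x ∈ K := fun x => (prK x).2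
  have hπK : ∀ x ∈ K, π x = x := by
    intro x hx
    have := Submodule.projectionOnto_apply_left hKc ⟨x, hx⟩
    simp [hπdef, hprK, this]
  have hprCK : ∀ x ∈ K, prC x = 0 := by
    intro x hx
    exact Submodule.projectionOnto_apply_right hKc.symm ⟨x, hx⟩
  have hc0 : prC x0 ≠ 0 := by
    intro h
    have hdec : (prK x0 : Fin k → ℂ) + (prC x0 : Fin k → ℂ) = x0 :=
      Submodule.projection_add_projection_eq_self hKc x0
    rw [h] at hdec
    simp only [Submodule.coe_zero, add_zero] at hdec
    have hx0K : x0 ∈ K := hdec ▸ (prK x0).2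
    exact hx0 hx0K
  obtain ⟨g, hg⟩ := (LinearMap.toSpanSingleton ℂ Kc (prC x0)).exists_leftInverse_of_injective
    (LinearMap.ker_toSpanSingleton ℂ hc0)
  set L : (Fin k → ℂ) →ₗ[ℂ] ℂ := g ∘ₗ prC with hLdef
  have hLK : ∀ x ∈ K, L x = 0 := by
    intro x hx
    simp [hLdef, hprCK x hx]
  have hLx0 : L x0 = 1 := by
    have h1 := LinearMap.congr_fun hg 1
    have h2 : LinearMap.toSpanSingleton ℂ Kc (prC x0) 1 = prC x0 := by
      simp [LinearMap.toSpanSingleton_apply]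
    simpa [hLdef, h2] using h1
  -- key construction: realize range U ⊔ span {w}
  have key : ∀ w : V, ∃ C : (Fin p → ℂ) →ₗ[ℂ] V,
      LinearMap.range (A + C ∘ₗ B) = U ⊔ (ℂ ∙ w) := by
    intro w
    set A' : (Fin k → ℂ) →ₗ[ℂ] V := A ∘ₗ π + L.smulRight w with hA'def
    have hA'app : ∀ x, A' x = A (π x) + L x • w := fun x => rfl
    have hM : LinearMap.ker B ≤ LinearMap.ker (A' - A) := by
      intro x hx
      have hx' : x ∈ K := hx
      simp [LinearMap.mem_ker, hA'app, hπK x hx', hLK x hx']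
    obtain ⟨C, hC⟩ := exists_comp_eq B (A' - A) hM
    have hAC : A + C ∘ₗ B = A' := by rw [hC]; abel
    refine ⟨C, ?_⟩
    rw [hAC]
    apply le_antisymm
    · rintro v ⟨x, rfl⟩
      rw [hA'app]
      exact Submodule.add_mem_sup (Submodule.mem_map_of_mem (hπmem x))
        (Submodule.smul_mem _ _ (Submodule.mem_span_singleton_self w))
    · apply sup_le
      · rintro v ⟨x, hxK, rfl⟩
        exact ⟨x, by simp [hA'app, hπK x hxK, hLK x hxK]⟩
      · rw [Submodule.span_singleton_le_iff_mem]
        refine ⟨x0 - π x0, ?_⟩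
        have h1 : π (x0 - π x0) = 0 := by
          rw [map_sub, hπK (π x0) (hπmem x0), sub_self]
        have h2 : L (x0 - π x0) = 1 := by
          rw [map_sub, hLK (π x0) (hπmem x0), hLx0, sub_zero]
        rw [hA'app, h1, h2, map_zero, zero_add, one_smul]
  -- case: ω vanishes identically on U
  by_cases hzero : ∀ u ∈ U, ∀ u' ∈ U, ω u u' = 0
  · obtain ⟨C, hC⟩ := key 0
    refine ⟨C, Or.inl ?_⟩
    have hr : LinearMap.range (A + C ∘ₗ B) = U := by
      rw [hC, Submodule.span_zero_singleton, sup_bot_eq]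
    rw [hr]
    exact hzero
  -- otherwise the radical R is a proper subspace of U
  push_neg at hzero
  obtain ⟨u1, hu1, u2, hu2, hne12⟩ := hzero
  have hRle : R ≤ U := inf_le_left
  have hRltU : R < U := by
    refine lt_of_le_of_ne hRle fun h => ?_
    have hu2Up : u2 ∈ Up := (h ▸ hu2 : u2 ∈ R).2
    exact hne12 (by rw [hsymm]; exact (hUp_mem u2).mp hu2Up u1 hu1)
  have hfr1 : Module.finrank ℂ R < Module.finrank ℂ U :=
    Submodule.finrank_lt_finrank_of_lt hRltU
  have hfr2 : Module.finrank ℂ R ≤ Module.finrank ℂ Up :=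
    Submodule.finrank_mono inf_le_right
  have hfr3 : Module.finrank ℂ U ≤ Module.finrank ℂ K := Submodule.finrank_map_le A K
  have hfr4 : Module.finrank ℂ (LinearMap.range B) + Module.finrank ℂ K = k := by
    have h1 := LinearMap.finrank_range_add_finrank_ker B
    simpa using h1
  have hfr5 : 0 < Module.finrank ℂ (LinearMap.range B) := by
    have h1 : (1 : ℕ) = Module.finrank ℂ (ℂ ∙ B x0) := (finrank_span_singleton hx0).symm
    have h2 : (ℂ ∙ B x0) ≤ LinearMap.range B :=
      (Submodule.span_singleton_le_iff_mem _ _).mpr ⟨x0, rfl⟩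
    have := Submodule.finrank_mono h2
    omega
  have hrank : Module.finrank ℂ R ≤ 1 := by
    rcases hk with hk | ⟨hk, hn4⟩ <;> omega
  by_cases hRbot : R = ⊥
  · -- ω is already nondegenerate on U
    obtain ⟨C, hC⟩ := key 0
    refine ⟨C, Or.inr ?_⟩
    have hr : LinearMap.range (A + C ∘ₗ B) = U := by
      rw [hC, Submodule.span_zero_singleton, sup_bot_eq]
    rw [hr]
    intro v hv hvne
    by_contra hcon
    push_neg at hcon
    have hvUp : v ∈ Up := (hUp_mem v).mpr hcon
    have : v ∈ R := ⟨hv, hvUp⟩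
    rw [hRbot, Submodule.mem_bot] at this
    exact hvne this
  · -- one-dimensional radical; fix it by adding one vector
    obtain ⟨u0, hu0R, hu0ne⟩ := (Submodule.ne_bot_iff R).mp hRbot
    have hRspan : R = ℂ ∙ u0 := by
      refine (Submodule.eq_of_le_of_finrank_le
        ((Submodule.span_singleton_le_iff_mem _ _).mpr hu0R) ?_).symm
      rw [finrank_span_singleton hu0ne]
      exact hrank
    obtain ⟨y, hy⟩ : ∃ y, ω u0 y ≠ 0 := by
      by_contra h
      push_neg at h
      exact hu0ne (hnd u0 h)
    set w : V := (ω u0 y)⁻¹ • y with hwdef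
    have hww : ω u0 w = 1 := by
      rw [hwdef, map_smul]
      field_simp
      rw [smul_eq_mul, one_div_mul_cancel hy]
    obtain ⟨C, hC⟩ := key w
    refine ⟨C, Or.inr ?_⟩
    rw [hC]
    intro v hv hvne
    by_contra hcon
    push_neg at hcon
    obtain ⟨u, hu, z, hz, rfl⟩ := Submodule.mem_sup.mp hv
    obtain ⟨b, rfl⟩ := Submodule.mem_span_singleton.mp hz
    have hu0U : u0 ∈ U := hRle hu0R
    have hb : b = 0 := by
      have h0 := hcon u0 (Submodule.mem_sup_left hu0U)
      have e1 : ω u u0 = 0 := by rw [hsymm]; exact (hUp_mem u0).mp hu0R.2 u hu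
      have e2 : ω w u0 = 1 := by rw [hsymm]; exact hww
      simpa [map_add, map_smul, e1, e2, LinearMap.add_apply, LinearMap.smul_apply] using h0
    subst hb
    simp only [zero_smul, add_zero] at hcon hvne
    have huUp : u ∈ Up := (hUp_mem u).mpr fun t ht => hcon t (Submodule.mem_sup_left ht)
    have huR : u ∈ R := ⟨hu, huUp⟩
    rw [hRspan] at huR
    obtain ⟨c, hc⟩ := Submodule.mem_span_singleton.mp huR
    have h3 := hcon w (Submodule.mem_sup_right (Submodule.mem_span_singleton_self w))
    rw [← hc] at h3
    have hc0 : c = 0 := by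
      simpa [map_smul, hww, LinearMap.smul_apply] using h3
    exact hvne (by rw [← hc, hc0, zero_smul])
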